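/- If G is a non-complete double-critical k-chromatic graph and H is a connected subgraph of G with at least 2 vertices, then the graph G/V(H) obtained from G by contracting V(H) to a single vertex is (k−1)-colourable; equivalently, there exists a function c from V(G) to a set of k−1 colours that is constant on V(H) and satisfies c(u) ≠ c(v) for every edge uv of G whose endpoints do not both lie in V(H). -/

import Mathlib

open SimpleGraph

/-- A graph is vertex-critical if deleting any vertex decreases the chromatic number. -/
def VertexCritical {V : Type} (G : SimpleGraph V) : Prop :=
  ∀ v : V, (G.induce ({v}ᶜ : Set V)).chromaticNumber < G.chromaticNumber

/-- A vertex-critical graph is double-critical if deleting the two end-vertices of any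
edge decreases the chromatic number by at least two. -/
def DoubleCritical {V : Type} (G : SimpleGraph V) : Prop :=
  VertexCritical G ∧
  ∀ x y : V, G.Adj x y →
    (G.induce ({x, y}ᶜ : Set V)).chromaticNumber + 2 ≤ G.chromaticNumber

/-- If `G` is a non-complete double-critical `k`-chromatic graph and `s` is the vertex set of
a connected subgraph of `G` with at least two vertices, then the graph obtained from `G` by
contracting `s` to a single vertex is `(k-1)`-colourable: there is a function `c` from the
vertices to `k-1` colours that is constant on `s` and distinguishes the endpoints of every
edge of `G` whose endpoints do not both lie in `s`. -/
theorem stmt1 {V : Type} [Fintype V] (G : SimpleGraph V) (k : ℕ)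
    (hnc : G ≠ ⊤) (hdc : DoubleCritical G) (hchrom : G.chromaticNumber = k)
    (s : Set V) (hconn : (G.induce s).Connected) (hcard : 2 ≤ s.ncard) :
    ∃ c : V → Fin (k - 1),
      (∀ u ∈ s, ∀ v ∈ s, c u = c v) ∧
      (∀ u v : V, G.Adj u v → ¬(u ∈ s ∧ v ∈ s) → c u ≠ c v) := by
  classical
  -- find an edge inside s
  obtain ⟨a, ha, b, hb, hab⟩ := (Set.one_lt_ncard (s.toFinite)).mp (by omega)
  obtain ⟨w⟩ := hconn ⟨a, ha⟩ ⟨b, hb⟩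
  obtain ⟨x, y, hxs, hys, hxy⟩ :
      ∃ x y : V, x ∈ s ∧ y ∈ s ∧ G.Adj x y := by
    cases w with
    | nil => exact absurd rfl hab
    | @cons _ u _ h q => exact ⟨a, u.1, ha, u.2, h⟩
  -- get a (k-2)-coloring of G - x - y
  have hle := hdc.2 x y hxy
  rw [hchrom] at hle
  have hk2 : 2 ≤ k := by
    have h0 : (0 : ℕ∞) + 2 ≤ (k : ℕ∞) := le_trans (by simp) hle
    simpa using (by exact_mod_cast h0 : (2 : ℕ∞) ≤ (k : ℕ∞))
  have hcol : (G.induce ({x, y}ᶜ : Set V)).Colorable (k - 2) := by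
    rw [← chromaticNumber_le_iff_colorable]
    have h2 : (G.induce ({x, y}ᶜ : Set V)).chromaticNumber + 2 ≤ ((k - 2 : ℕ) : ℕ∞) + 2 := by
      refine le_trans hle (le_of_eq ?_)
      have : ((k - 2 : ℕ) : ℕ∞) + 2 = ((k - 2 + 2 : ℕ) : ℕ∞) := by push_cast; ring
      rw [this]; congr 1; omega
    exact (ENat.add_le_add_iff_right (by simp)).mp h2
  obtain ⟨C⟩ := hcol
  have hsub : ∀ v : V, v ∉ s → v ∈ ({x, y}ᶜ : Set V) := by
    intro v hv
    simp only [Set.mem_compl_iff, Set.mem_insert_iff, Set.mem_singleton_iff]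
    rintro (rfl | rfl) <;> [exact hv hxs; exact hv hys]
  refine ⟨fun v => if hv : v ∈ s then ⟨k - 2, by omega⟩
    else ⟨(C ⟨v, hsub v hv⟩).val, by have := (C ⟨v, hsub v hv⟩).isLt; omega⟩, ?_, ?_⟩
  · intro u hu v hv; simp [hu, hv]
  · intro u v huv hns
    by_cases hu : u ∈ s <;> by_cases hv : v ∈ s
    · exact absurd ⟨hu, hv⟩ hns
    · have := (C ⟨v, hsub v hv⟩).isLt
      simp only [dif_pos hu, dif_neg hv]
      intro h
      have := Fin.mk.injEq _ _ _ _ ▸ h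
      simp only [Fin.mk.injEq] at h
      omega
    · have := (C ⟨u, hsub u hu⟩).isLt
      simp only [dif_pos hv, dif_neg hu]
      intro h
      simp only [Fin.mk.injEq] at h
      omega
    · simp only [dif_neg hu, dif_neg hv]
      intro h
      simp only [Fin.mk.injEq] at h
      exact C.valid (by exact huv : (G.induce ({x, y}ᶜ : Set V)).Adj ⟨u, _⟩ ⟨v, _⟩)
        (Fin.ext h)
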